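/- Let a < b be real numbers, let a = x_0 < x_1 < ⋯ < x_n = b be a partition of [a,b] with mesh h := max_{1≤i≤n} (x_i − x_{i−1}). Let g : ℝ → ℝ be square-integrable on [a,b], let c ∈ ℝ, define v(x) = c + ∫_a^x g(t) dt for x ∈ [a,b], and let Pv be the piecewise linear interpolant of v with respect to the partition. Then for every x ∈ [a,b], |Pv(x) − v(x)| ≤ 2 h^{1/2} (∫_a^b g(t)² dt)^{1/2}. -/

import Mathlib

open MeasureTheory Set intervalIntegral

lemma cs_aux {a b z y : ℝ} (g : ℝ → ℝ)
    (hg : MemLp g 2 (volume.restrict (Set.Icc a b)))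
    (haz : a ≤ z) (hzy : z ≤ y) (hyb : y ≤ b) :
    |∫ s in z..y, g s| ≤ Real.sqrt (y - z) * Real.sqrt (∫ s in Set.Icc a b, (g s) ^ 2) := by
  have hsub : Set.Icc z y ⊆ Set.Icc a b := Set.Icc_subset_Icc haz hyb
  have hg' : MemLp g 2 (volume.restrict (Set.Icc z y)) :=
    hg.mono_measure (Measure.restrict_mono hsub le_rfl)
  have hsq_big : IntegrableOn (fun s => g s ^ 2) (Set.Icc a b) := by
    have := hg.integrable_sq
    simpa [IntegrableOn] using this
  have hsq_nonneg : ∀ s, 0 ≤ g s ^ 2 := fun s => sq_nonneg _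
  have hmono_int : (∫ s in Set.Icc z y, g s ^ 2) ≤ ∫ s in Set.Icc a b, g s ^ 2 := by
    apply setIntegral_mono_set hsq_big
    · exact Filter.Eventually.of_forall hsq_nonneg
    · exact HasSubset.Subset.eventuallyLE hsub
  have hCS : (∫ s in Set.Icc z y, |g s|) ≤
      Real.sqrt (∫ s in Set.Icc z y, g s ^ 2) * Real.sqrt (y - z) := by
    have hpq : Real.HolderConjugate 2 2 := by constructor <;> norm_num
    have h1 : MemLp (fun _ : ℝ => (1 : ℝ)) (ENNReal.ofReal 2) (volume.restrict (Set.Icc z y)) := by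
      apply memLp_const
    have habs : MemLp (fun s => |g s|) (ENNReal.ofReal 2) (volume.restrict (Set.Icc z y)) := by
      have : (ENNReal.ofReal 2) = 2 := by norm_num
      rw [this]
      simpa [Real.norm_eq_abs] using hg'.norm
    have := integral_mul_le_Lp_mul_Lq_of_nonneg hpq
      (f := fun s => |g s|) (g := fun _ => (1:ℝ))
      (μ := volume.restrict (Set.Icc z y))
      (Filter.Eventually.of_forall fun s => abs_nonneg _)
      (Filter.Eventually.of_forall fun s => zero_le_one) habs h1
    simp only [mul_one, Real.one_rpow] at this
    calc (∫ s in Set.Icc z y, |g s|) ≤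
        (∫ s in Set.Icc z y, |g s| ^ (2:ℝ)) ^ (1/(2:ℝ)) *
        (∫ _ in Set.Icc z y, (1:ℝ)) ^ (1/(2:ℝ)) := by
          simpa using this
      _ = Real.sqrt (∫ s in Set.Icc z y, g s ^ 2) * Real.sqrt (y - z) := by
          rw [Real.sqrt_eq_rpow, Real.sqrt_eq_rpow]
          congr 2
          · apply MeasureTheory.integral_congr_ae
            exact Filter.Eventually.of_forall fun s => by
              rw [show ((2:ℝ)) = ((2:ℕ):ℝ) by norm_num]
              simp [Real.rpow_natCast, sq_abs]
          · simp [Real.volume_Icc, hzy, ENNReal.toReal_ofReal (by linarith : (0:ℝ) ≤ y - z)]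
  calc |∫ s in z..y, g s| ≤ ∫ s in Set.Icc z y, |g s| := by
        rw [intervalIntegral.integral_of_le hzy, integral_Icc_eq_integral_Ioc]
        simpa [Real.norm_eq_abs] using
          norm_integral_le_integral_norm (μ := volume.restrict (Set.Ioc z y)) g
    _ ≤ Real.sqrt (∫ s in Set.Icc z y, g s ^ 2) * Real.sqrt (y - z) := hCS
    _ ≤ Real.sqrt (y - z) * Real.sqrt (∫ s in Set.Icc a b, g s ^ 2) := by
        rw [mul_comm]
        exact mul_le_mul_of_nonneg_left (Real.sqrt_le_sqrt hmono_int) (Real.sqrt_nonneg _)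

/-- Let `a = x_0 < ⋯ < x_n = b` be a partition with mesh `h`, let
`v x = c + ∫_a^x g` with `g` square-integrable on `[a,b]`, and let `P` be the
piecewise linear interpolant of `v` on the partition. Then for every `t ∈ [a,b]`,
`|P t − v t| ≤ 2 h^{1/2} (∫_a^b g²)^{1/2}`. -/
theorem interpolant_pointwise_estimate
    (a b : ℝ) (hab : a < b)
    (n : ℕ) (hn : 1 ≤ n)
    (x : ℕ → ℝ) (hx0 : x 0 = a) (hxn : x n = b)
    (hmono : ∀ i < n, x i < x (i + 1))
    (h : ℝ) (hh : h = (Finset.Icc 1 n).sup' (by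
      simpa using Finset.nonempty_Icc.mpr hn) (fun i => x i - x (i - 1)))
    (g : ℝ → ℝ)
    (hg : MeasureTheory.MemLp g 2 (volume.restrict (Set.Icc a b)))
    (c : ℝ) (v : ℝ → ℝ)
    (hv : ∀ t ∈ Set.Icc a b, v t = c + ∫ s in a..t, g s)
    (P : ℝ → ℝ)
    (hP : ∀ i, 1 ≤ i → i ≤ n → ∀ t ∈ Set.Icc (x (i - 1)) (x i),
      P t = v (x (i - 1)) + (v (x i) - v (x (i - 1))) * (t - x (i - 1)) / (x i - x (i - 1))) :
    ∀ t ∈ Set.Icc a b,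
      |P t - v t| ≤ 2 * Real.sqrt h * Real.sqrt (∫ s in Set.Icc a b, (g s) ^ 2) := by
  intro t ht
  set I := ∫ s in Set.Icc a b, (g s) ^ 2 with hI
  have hI0 : 0 ≤ I := setIntegral_nonneg measurableSet_Icc fun s _ => sq_nonneg _
  -- monotonicity of the partition
  have hmono' : ∀ j, j ≤ n → ∀ i, i ≤ j → x i ≤ x j := by
    intro j
    induction j with
    | zero => intro _ i hi; rw [Nat.le_zero.mp hi]
    | succ m ih =>
      intro hjn i hi
      rcases eq_or_lt_of_le hi with rfl | hlt
      · rfl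
      · have hi' : i ≤ m := Nat.lt_succ_iff.mp hlt
        exact le_trans (ih (le_trans (Nat.le_succ m) hjn) i hi')
          (le_of_lt (hmono m (Nat.lt_of_succ_le hjn)))
  have hx_mem : ∀ i ≤ n, x i ∈ Set.Icc a b := by
    intro i hin
    constructor
    · rw [← hx0]; exact hmono' i hin 0 (Nat.zero_le _)
    · rw [← hxn]; exact hmono' n le_rfl i hin
  -- each mesh interval length is ≤ h
  have hstep : ∀ i, 1 ≤ i → i ≤ n → x i - x (i - 1) ≤ h := by
    intro i h1 h2
    rw [hh]
    exact Finset.le_sup' (fun i => x i - x (i - 1)) (Finset.mem_Icc.mpr ⟨h1, h2⟩)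
  -- integrability of g
  have hfin : IsFiniteMeasure (volume.restrict (Set.Icc a b)) := by
    constructor
    rw [Measure.restrict_apply_univ, Real.volume_Icc]
    exact ENNReal.ofReal_lt_top
  have hgint : IntegrableOn g (Set.Icc a b) := by
    have := hg.integrable one_le_two
    simpa [IntegrableOn] using this
  have hint : ∀ z ∈ Set.Icc a b, ∀ y ∈ Set.Icc a b, IntervalIntegrable g volume z y := by
    intro z hz y hy
    exact (hgint.mono_set (Set.uIcc_subset_Icc hz hy)).intervalIntegrable
  -- v differences are integrals
  have hvdiff : ∀ z ∈ Set.Icc a b, ∀ y ∈ Set.Icc a b, v y - v z = ∫ s in z..y, g s := by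
    intro z hz y hy
    rw [hv z hz, hv y hy]
    have := intervalIntegral.integral_interval_sub_left
      (hint a (Set.left_mem_Icc.mpr (le_of_lt hab)) y hy)
      (hint a (Set.left_mem_Icc.mpr (le_of_lt hab)) z hz)
    linarith [this]
  -- find the subinterval containing t
  classical
  obtain ⟨i, hi1, hin, hzt, hty⟩ : ∃ i, 1 ≤ i ∧ i ≤ n ∧ x (i - 1) ≤ t ∧ t ≤ x i := by
    set k := Nat.findGreatest (fun i => x i ≤ t) n with hk
    have hkn : k ≤ n := Nat.findGreatest_le n
    have hxk : x k ≤ t :=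
      Nat.findGreatest_spec (P := fun i => x i ≤ t) (Nat.zero_le n)
        (by show x 0 ≤ t; rw [hx0]; exact ht.1)
    rcases eq_or_lt_of_le hkn with heq | hlt
    · refine ⟨n, hn, le_rfl, ?_, ?_⟩
      · exact le_trans (hmono' n le_rfl (n-1) (Nat.sub_le n 1)) (heq ▸ hxk)
      · rw [hxn]; exact ht.2
    · refine ⟨k + 1, Nat.le_add_left 1 k, Nat.succ_le_of_lt hlt, ?_, ?_⟩
      · simpa using hxk
      · have := Nat.findGreatest_is_greatest (Nat.lt_succ_self k) (Nat.succ_le_of_lt hlt)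
        push_neg at this
        exact le_of_lt this
  set z := x (i - 1) with hzdef
  set y := x i with hydef
  have hzy : z < y := by
    have h1 : i - 1 < n := lt_of_lt_of_le (Nat.sub_lt hi1 one_pos) hin
    have h2 := hmono (i - 1) h1
    rw [Nat.sub_add_cancel hi1] at h2
    exact h2
  have hz_mem : z ∈ Set.Icc a b := hx_mem _ (le_trans (Nat.sub_le i 1) hin)
  have hy_mem : y ∈ Set.Icc a b := hx_mem _ hin
  have hPt : P t = v z + (v y - v z) * (t - z) / (y - z) :=
    hP i hi1 hin t ⟨hzt, hty⟩
  have ht_mem : t ∈ Set.Icc a b := ht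
  -- the two key bounds
  have hyz_h : y - z ≤ h := hstep i hi1 hin
  have bound1 : |v t - v z| ≤ Real.sqrt h * Real.sqrt I := by
    rw [hvdiff z hz_mem t ht_mem]
    calc |∫ s in z..t, g s| ≤ Real.sqrt (t - z) * Real.sqrt I :=
          cs_aux g hg hz_mem.1 hzt ht_mem.2
      _ ≤ Real.sqrt h * Real.sqrt I := by
          apply mul_le_mul_of_nonneg_right _ (Real.sqrt_nonneg _)
          apply Real.sqrt_le_sqrt
          linarith
  have bound2 : |v y - v z| ≤ Real.sqrt h * Real.sqrt I := by
    rw [hvdiff z hz_mem y hy_mem]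
    calc |∫ s in z..y, g s| ≤ Real.sqrt (y - z) * Real.sqrt I :=
          cs_aux g hg hz_mem.1 (le_of_lt hzy) hy_mem.2
      _ ≤ Real.sqrt h * Real.sqrt I := by
          apply mul_le_mul_of_nonneg_right _ (Real.sqrt_nonneg _)
          exact Real.sqrt_le_sqrt hyz_h
  have hratio : 0 ≤ (t - z) / (y - z) ∧ (t - z) / (y - z) ≤ 1 := by
    constructor
    · apply div_nonneg <;> linarith
    · rw [div_le_one (by linarith)]; linarith
  have key : |P t - v t| ≤ |v t - v z| + |v y - v z| * ((t - z) / (y - z)) := by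
    rw [hPt]
    have : v z + (v y - v z) * (t - z) / (y - z) - v t
        = -(v t - v z) + (v y - v z) * ((t - z) / (y - z)) := by ring
    rw [this]
    calc |(-(v t - v z)) + (v y - v z) * ((t - z) / (y - z))|
        ≤ |(-(v t - v z))| + |(v y - v z) * ((t - z) / (y - z))| := abs_add_le _ _
      _ = |v t - v z| + |v y - v z| * ((t - z) / (y - z)) := by
          rw [abs_neg, abs_mul, abs_of_nonneg hratio.1]
  calc |P t - v t| ≤ |v t - v z| + |v y - v z| * ((t - z) / (y - z)) := key
    _ ≤ Real.sqrt h * Real.sqrt I + Real.sqrt h * Real.sqrt I * 1 := by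
        apply add_le_add bound1
        apply mul_le_mul bound2 hratio.2 hratio.1
        positivity
    _ = 2 * Real.sqrt h * Real.sqrt I := by ring
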